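/- Let 𝔫 be a 2-step nilpotent Lie algebra with group N given by the BCH product, and A ⊆ N finite symmetric with 1 ∈ A and AA ⊆ ⋃_{i=1}^k x_i A. Then |log(A) + log(A) + log(A)| ≤ k^{11}|A|: every element a + b + c with a, b, c ∈ A satisfies 2(a+b+c) ∈ log(A^{12}). -/
import Mathlib

/-- The BCH product on a 2-step nilpotent Lie algebra: `x * y = x + y + (1/2)⁅x, y⁆`. -/
def bchMul {L : Type*} [LieRing L] [LieAlgebra ℚ L] (x y : L) : L :=
  x + y + (2⁻¹ : ℚ) • ⁅x, y⁆

/-- The `l`-fold product set `A^l` with respect to the BCH product (`A^0 = {0}`). -/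
def bchPow {L : Type*} [LieRing L] [LieAlgebra ℚ L] [DecidableEq L] :
    ℕ → Finset L → Finset L
  | 0, _ => {0}
  | n + 1, A => Finset.image₂ bchMul A (bchPow n A)

section Aux
set_option linter.unusedSectionVars false
variable {L : Type*} [LieRing L] [LieAlgebra ℚ L] [DecidableEq L]

lemma bch_zero_right (x : L) : bchMul x 0 = x := by simp [bchMul]

lemma bch_assoc (h2 : ∀ x y z : L, ⁅x, ⁅y, z⁆⁆ = 0) (x y z : L) :
    bchMul (bchMul x y) z = bchMul x (bchMul y z) := by
  have h2' : ∀ x y z : L, ⁅⁅y, z⁆, x⁆ = 0 := fun a b c => by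
    rw [← lie_skew, h2, neg_zero]
  simp only [bchMul, add_lie, lie_add, smul_add, lie_smul, smul_lie, h2, h2', smul_zero,
    add_zero]
  module

/-- The palindrome identity: `a*b*c*c*b*a = 2(a+b+c)` in a 2-step nilpotent BCH group. -/
lemma bch_key (h2 : ∀ x y z : L, ⁅x, ⁅y, z⁆⁆ = 0) (a b c : L) :
    (2 : ℤ) • (a + b + c) = bchMul a (bchMul b (bchMul c (bchMul c (bchMul b a)))) := by
  have h2' : ∀ x y z : L, ⁅⁅y, z⁆, x⁆ = 0 := fun a b c => by
    rw [← lie_skew, h2, neg_zero]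
  rw [two_zsmul]
  simp only [bchMul, add_lie, lie_add, smul_add, lie_smul, smul_lie, h2, h2', smul_zero,
    add_zero, lie_self, zero_add]
  rw [← lie_skew b a, ← lie_skew c a, ← lie_skew c b]
  module

lemma bchPow_zero_mem {A : Finset L} (hone : (0:L) ∈ A) : ∀ n, (0:L) ∈ bchPow n A := by
  intro n
  induction n with
  | zero => simp [bchPow]
  | succ n ih =>
      have h : (0:L) = bchMul 0 0 := by simp [bchMul]
      rw [bchPow, h]
      exact Finset.mem_image₂_of_mem hone ih

lemma bchPow_one (A : Finset L) : bchPow 1 A = A := by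
  ext y; simp [bchPow, bchMul]

/-- Every doubled triple sum lies in `A^12`. -/
lemma mem_bchPow12 (h2 : ∀ x y z : L, ⁅x, ⁅y, z⁆⁆ = 0) {A : Finset L}
    (hone : (0:L) ∈ A) {a b c : L} (ha : a ∈ A) (hb : b ∈ A) (hc : c ∈ A) :
    (2 : ℤ) • (a + b + c) ∈ bchPow 12 A := by
  have h6 : (0:L) ∈ bchPow 6 A := bchPow_zero_mem hone 6
  have h7 : a ∈ bchPow 7 A := by
    have h : bchMul a (0:L) ∈ bchPow 7 A := Finset.mem_image₂_of_mem ha h6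
    rwa [bch_zero_right] at h
  have h8 : bchMul b a ∈ bchPow 8 A := Finset.mem_image₂_of_mem hb h7
  have h9 : bchMul c (bchMul b a) ∈ bchPow 9 A := Finset.mem_image₂_of_mem hc h8
  have h10 : bchMul c (bchMul c (bchMul b a)) ∈ bchPow 10 A := Finset.mem_image₂_of_mem hc h9
  have h11 : bchMul b (bchMul c (bchMul c (bchMul b a))) ∈ bchPow 11 A :=
    Finset.mem_image₂_of_mem hb h10
  have h12 : bchMul a (bchMul b (bchMul c (bchMul c (bchMul b a)))) ∈ bchPow 12 A :=
    Finset.mem_image₂_of_mem ha h11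
  rwa [bch_key h2 a b c]

end Aux

/-- Let 𝔫 be a 2-step nilpotent Lie algebra with BCH group `N`, and `A ⊆ N`
finite symmetric with `1 ∈ A` and `AA ⊆ ⋃_{i=1}^k xᵢA`. Then
`|log A + log A + log A| ≤ k^{11}|A|` (`log` = identity): every element `a + b + c` with
`a, b, c ∈ A` satisfies `2(a+b+c) ∈ log (A^{12})`. -/
theorem stmt18 (L : Type*) [LieRing L] [LieAlgebra ℚ L] [DecidableEq L]
    (h2 : ∀ x y z : L, ⁅x, ⁅y, z⁆⁆ = 0)
    (A : Finset L) (k : ℕ)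
    (hsym : ∀ a ∈ A, -a ∈ A) (hone : (0 : L) ∈ A)
    (x : Fin k → L)
    (hcov : ∀ p ∈ Finset.image₂ bchMul A A, ∃ i : Fin k, ∃ a ∈ A, p = bchMul (x i) a) :
    (Finset.image₂ (· + ·) A (Finset.image₂ (· + ·) A A)).card ≤ k ^ 11 * A.card ∧
      ∀ a ∈ A, ∀ b ∈ A, ∀ c ∈ A, (2 : ℤ) • (a + b + c) ∈ bchPow 12 A := by
  refine ⟨?_, fun a ha b hb c hc => mem_bchPow12 h2 hone ha hb hc⟩
  -- growth of BCH powers under the covering condition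
  have hpow : ∀ n : ℕ, (bchPow (n+1) A).card ≤ k ^ n * A.card := by
    intro n
    induction n with
    | zero => rw [bchPow_one]; simp
    | succ n ih =>
        have hsub : bchPow (n+2) A ⊆ (Finset.univ : Finset (Fin k)).biUnion
            (fun i => (bchPow (n+1) A).image (fun p => bchMul (x i) p)) := by
          intro y hy
          rw [show bchPow (n+2) A = Finset.image₂ bchMul A (bchPow (n+1) A) from rfl] at hy
          obtain ⟨a, ha, p, hp, rfl⟩ := Finset.mem_image₂.mp hy
          rw [show bchPow (n+1) A = Finset.image₂ bchMul A (bchPow n A) from rfl] at hp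
          obtain ⟨a', ha', q, hq, rfl⟩ := Finset.mem_image₂.mp hp
          obtain ⟨i, a'', ha'', hia⟩ := hcov (bchMul a a') (Finset.mem_image₂_of_mem ha ha')
          refine Finset.mem_biUnion.mpr ⟨i, Finset.mem_univ i, Finset.mem_image.mpr
            ⟨bchMul a'' q, Finset.mem_image₂_of_mem ha'' hq, ?_⟩⟩
          rw [← bch_assoc h2, ← hia, bch_assoc h2]
        calc (bchPow (n+2) A).card
            ≤ ((Finset.univ : Finset (Fin k)).biUnion
              (fun i => (bchPow (n+1) A).image (fun p => bchMul (x i) p))).card :=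
              Finset.card_le_card hsub
          _ ≤ ∑ i : Fin k, ((bchPow (n+1) A).image (fun p => bchMul (x i) p)).card :=
              Finset.card_biUnion_le
          _ ≤ ∑ _i : Fin k, (bchPow (n+1) A).card :=
              Finset.sum_le_sum fun i _ => Finset.card_image_le
          _ = k * (bchPow (n+1) A).card := by simp [mul_comm]
          _ ≤ k * (k ^ n * A.card) := Nat.mul_le_mul_left _ ih
          _ = k ^ (n+1) * A.card := by ring
  -- doubling map is injective
  have hinj : Function.Injective (fun s : L => (2 : ℤ) • s) := by
    intro s t h
    simp only at h
    have h' : (2 : ℚ) • s = (2 : ℚ) • t := by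
      rw [two_smul, two_smul, ← two_zsmul, ← two_zsmul]; exact h
    have := congrArg (fun u => ((2 : ℚ)⁻¹) • u) h'
    simpa [smul_smul] using this
  set T := Finset.image₂ (· + ·) A (Finset.image₂ (· + ·) A A) with hT
  have hsub12 : T.image (fun s => (2 : ℤ) • s) ⊆ bchPow 12 A := by
    intro y hy
    obtain ⟨s, hs, rfl⟩ := Finset.mem_image.mp hy
    rw [hT] at hs
    obtain ⟨a, ha, t, ht, rfl⟩ := Finset.mem_image₂.mp hs
    obtain ⟨b, hb, c, hc, rfl⟩ := Finset.mem_image₂.mp ht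
    have := mem_bchPow12 h2 hone ha hb hc
    simpa [add_assoc] using this
  calc T.card = (T.image (fun s => (2 : ℤ) • s)).card :=
        (Finset.card_image_of_injective T hinj).symm
    _ ≤ (bchPow 12 A).card := Finset.card_le_card hsub12
    _ ≤ k ^ 11 * A.card := hpow 11
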